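/- Let A be a primitive square matrix with nonnegative real entries indexed by a finite nonempty type, let s > 0, let r and l have all entries strictly positive, and assume A·r = s·r, lᵀ·A = s·lᵀ and Σ_w l_w·r_w = 1. Then there exist a constant C > 0 and a number ρ with 0 ≤ ρ < 1 such that for every real vector v and every n ≥ 0, ‖s^{−n}·(A^n·v) − (Σ_w l_w·v_w)·r‖ ≤ C·ρ^n·‖v‖. -/

import Mathlib

open Finset

/-- Core contraction estimate: if the nonnegative coefficients `q` dominate
`ε • p` and `u` is `p`-orthogonal, then `∑ q j * u j` is small. -/
lemma rpf_aux_contr {n : Type*} [Fintype n] (q p u : n → ℝ) (ε M : ℝ)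
    (hq : ∀ j, ε * p j ≤ q j) (hu : ∑ j, p j * u j = 0)
    (hM0 : 0 ≤ M) (hM : ∀ j, |u j| ≤ M) :
    |∑ j, q j * u j| ≤ ((∑ j, q j) - ε * ∑ j, p j) * M := by
  have h1 : ∑ j, q j * u j = ∑ j, (q j - ε * p j) * u j := by
    rw [Finset.sum_congr rfl (fun j _ => sub_mul (q j) (ε * p j) (u j)),
      Finset.sum_sub_distrib]
    have h2 : ∑ j, ε * p j * u j = ε * ∑ j, p j * u j := by
      rw [Finset.mul_sum]; exact Finset.sum_congr rfl fun j _ => by ring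
    rw [h2, hu, mul_zero, sub_zero]
  rw [h1]
  calc |∑ j, (q j - ε * p j) * u j| ≤ ∑ j, |(q j - ε * p j) * u j| :=
        Finset.abs_sum_le_sum_abs _ _
    _ ≤ ∑ j, (q j - ε * p j) * M := by
        refine Finset.sum_le_sum fun j _ => ?_
        rw [abs_mul, abs_of_nonneg (by linarith [hq j])]
        exact mul_le_mul_of_nonneg_left (hM j) (by linarith [hq j])
    _ = ((∑ j, q j) - ε * ∑ j, p j) * M := by
        rw [← Finset.sum_mul, Finset.sum_sub_distrib, ← Finset.mul_sum]

/-- **Ruelle–Perron–Frobenius, quantitative power-method convergence.**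
With Perron data `(s, r, l)` for a primitive nonnegative matrix `A`, there are
`C > 0` and `0 ≤ ρ < 1` such that for every vector `v` and every `m`,
`‖s⁻ᵐ • (Aᵐ.mulVec v) − (∑ w, l w * v w) • r‖ ≤ C * ρ ^ m * ‖v‖`. -/
theorem rpf_power_method_convergence_rate
    {n : Type*} [Fintype n] [Nonempty n] [DecidableEq n]
    (A : Matrix n n ℝ) (hA : ∀ i j, 0 ≤ A i j)
    (hprim : ∃ k : ℕ, 1 ≤ k ∧ ∀ i j, 0 < (A ^ k) i j)
    (s : ℝ) (hs : 0 < s) (r l : n → ℝ)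
    (hr : ∀ i, 0 < r i) (hl : ∀ i, 0 < l i)
    (hright : A.mulVec r = s • r) (hleft : Matrix.vecMul l A = s • l)
    (hnorm : ∑ w, l w * r w = 1) :
    ∃ (C : ℝ) (ρ : ℝ), 0 < C ∧ 0 ≤ ρ ∧ ρ < 1 ∧
      ∀ (v : n → ℝ) (m : ℕ),
        ‖(s ^ m)⁻¹ • (A ^ m).mulVec v - (∑ w, l w * v w) • r‖ ≤
          C * ρ ^ m * ‖v‖ := by
  classical
  obtain ⟨k, hk1, hkpos⟩ := hprim
  have hk0 : 0 < k := hk1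
  have hrne : ∀ i, r i ≠ 0 := fun i => (hr i).ne'
  have hspow : ∀ m : ℕ, (0:ℝ) < s ^ m := fun m => pow_pos hs m
  have hsne : ∀ m : ℕ, (s:ℝ) ^ m ≠ 0 := fun m => (hspow m).ne'
  have hApow : ∀ (m : ℕ) (i j : n), 0 ≤ (A ^ m) i j := by
    intro m
    induction m with
    | zero =>
      intro i j
      by_cases h : i = j <;> simp [Matrix.one_apply, h]
    | succ m ih =>
      intro i j
      rw [pow_succ, Matrix.mul_apply]
      exact Finset.sum_nonneg fun x _ => mul_nonneg (ih i x) (hA x j)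
  have hAr : ∀ m : ℕ, (A ^ m).mulVec r = s ^ m • r := by
    intro m
    induction m with
    | zero => simp [Matrix.one_mulVec]
    | succ m ih =>
      rw [pow_succ, ← Matrix.mulVec_mulVec, hright, Matrix.mulVec_smul, ih,
        smul_smul, pow_succ]
      ring_nf
  have hlA : ∀ m : ℕ, Matrix.vecMul l (A ^ m) = s ^ m • l := by
    intro m
    induction m with
    | zero => simp [Matrix.vecMul_one]
    | succ m ih =>
      rw [pow_succ, ← Matrix.vecMul_vecMul, ih, Matrix.smul_vecMul, hleft,
        smul_smul, pow_succ]
  have hmv : ∀ (M : Matrix n n ℝ) (x : n → ℝ) (i : n),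
      M.mulVec x i = ∑ j, M i j * x j := by
    intro M x i; simp [Matrix.mulVec, dotProduct]
  -- the normalized transition kernels
  set N : ℕ → n → n → ℝ := fun a i j => (s ^ a)⁻¹ * (A ^ a) i j * r j / r i
    with hN
  have hN_nonneg : ∀ a i j, 0 ≤ N a i j := fun a i j =>
    div_nonneg (mul_nonneg (mul_nonneg (inv_pos.2 (hspow a)).le (hApow a i j))
      (hr j).le) (hr i).le
  have hNrow : ∀ (a : ℕ) (i : n), ∑ j, N a i j = 1 := by
    intro a i
    have h1 : ∑ j, N a i j = (s ^ a)⁻¹ * ((A ^ a).mulVec r i) / r i := by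
      rw [hmv, Finset.mul_sum, Finset.sum_div]
      exact Finset.sum_congr rfl fun j _ => by rw [hN]; ring
    rw [h1, hAr a, Pi.smul_apply, smul_eq_mul, inv_mul_cancel_left₀ (hsne a),
      div_self (hrne i)]
  -- the coupling constant
  set ε : ℝ := Finset.univ.inf' Finset.univ_nonempty
    (fun x : n × n => N k x.1 x.2 / (l x.2 * r x.2)) with hε
  have hε_pos : 0 < ε := by
    rw [hε, Finset.lt_inf'_iff]
    intro x _
    exact div_pos (div_pos (mul_pos (mul_pos (inv_pos.2 (hspow k))
      (hkpos x.1 x.2)) (hr x.2)) (hr x.1)) (mul_pos (hl x.2) (hr x.2))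
  have hε_le : ∀ i j, ε * (l j * r j) ≤ N k i j := by
    intro i j
    have h1 : ε ≤ N k i j / (l j * r j) :=
      Finset.inf'_le _ (Finset.mem_univ (i, j))
    exact (le_div_iff₀ (mul_pos (hl j) (hr j))).mp h1
  set θ : ℝ := max (1 - ε) (1/2) with hθ
  have hθ_half : (1:ℝ)/2 ≤ θ := le_max_right _ _
  have hθ_pos : 0 < θ := lt_of_lt_of_le (by norm_num) hθ_half
  have hθ_lt1 : θ < 1 := max_lt (by linarith) (by norm_num)
  set ρ : ℝ := θ ^ ((k:ℝ)⁻¹) with hρ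
  have hρ_nonneg : 0 ≤ ρ := Real.rpow_nonneg hθ_pos.le _
  have hρ_lt1 : ρ < 1 := Real.rpow_lt_one hθ_pos.le hθ_lt1
    (by positivity)
  have hρk : ρ ^ k = θ := Real.rpow_inv_natCast_pow hθ_pos.le hk0.ne'
  have hθρ : ∀ m : ℕ, θ ^ (m / k) ≤ 2 * ρ ^ m := by
    intro m
    have hmle : m ≤ k * (m / k) + k := by
      have := Nat.div_add_mod m k
      have := Nat.mod_lt m hk0
      omega
    have h2 : ρ ^ (k * (m / k) + k) ≤ ρ ^ m :=
      pow_le_pow_of_le_one hρ_nonneg hρ_lt1.le hmle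
    have h3 : ρ ^ (k * (m / k) + k) = θ ^ (m / k) * θ := by
      rw [pow_add, pow_mul, hρk]
    have h4 : 0 ≤ θ ^ (m / k) := pow_nonneg hθ_pos.le _
    nlinarith
  -- constants
  set K : ℝ := (∑ i, (r i)⁻¹) + ∑ i, l i with hK
  have hK_pos : 0 < K :=
    add_pos (Finset.sum_pos (fun i _ => inv_pos.2 (hr i)) Finset.univ_nonempty)
      (Finset.sum_pos (fun i _ => hl i) Finset.univ_nonempty)
  set R : ℝ := ∑ i, r i with hR
  have hR_pos : 0 < R := Finset.sum_pos (fun i _ => hr i) Finset.univ_nonempty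
  refine ⟨2 * R * K, ρ, by positivity, hρ_nonneg, hρ_lt1, ?_⟩
  intro v m
  set c : ℝ := ∑ w, l w * v w with hc
  set w : ℕ → n → ℝ :=
    fun m i => ((s ^ m)⁻¹ * (A ^ m).mulVec v i - c * r i) / r i with hw
  -- the evolution identity
  have hiter : ∀ (a m : ℕ) (i : n), w (m + a) i = ∑ j, N a i j * w m j := by
    intro a m i
    have hsum1 : ∑ j, (A ^ a) i j * ((s ^ m)⁻¹ * (A ^ m).mulVec v j - c * r j)
        = (s ^ m)⁻¹ * (A ^ (m + a)).mulVec v i - c * (s ^ a * r i) := by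
      have hfun : (fun j => (s ^ m)⁻¹ * (A ^ m).mulVec v j - c * r j)
          = (s ^ m)⁻¹ • (A ^ m).mulVec v - c • r := by
        funext j; simp [smul_eq_mul]
      calc ∑ j, (A ^ a) i j * ((s ^ m)⁻¹ * (A ^ m).mulVec v j - c * r j)
          = (A ^ a).mulVec ((s ^ m)⁻¹ • (A ^ m).mulVec v - c • r) i := by
            rw [hmv]
            exact Finset.sum_congr rfl fun j _ => by simp [smul_eq_mul]
        _ = (s ^ m)⁻¹ * (A ^ (m + a)).mulVec v i - c * (s ^ a * r i) := by
            rw [Matrix.mulVec_sub, Matrix.mulVec_smul, Matrix.mulVec_smul,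
              Matrix.mulVec_mulVec, ← pow_add, hAr a, add_comm a m]
            simp [smul_eq_mul, mul_assoc]
    have hterm : ∀ j, N a i j * w m j
        = (s ^ a)⁻¹ * ((A ^ a) i j * ((s ^ m)⁻¹ * (A ^ m).mulVec v j - c * r j)) / r i := by
      intro j
      rw [hN, hw]
      field_simp [hrne i, hrne j]
    rw [Finset.sum_congr rfl fun j _ => hterm j]
    rw [← Finset.sum_div, ← Finset.mul_sum, hsum1, hw]
    field_simp [hrne i, hsne a, hsne m, hsne (m + a)]
    ring
  -- orthogonality
  have horth : ∀ m : ℕ, ∑ j, (l j * r j) * w m j = 0 := by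
    intro m
    have h1 : ∀ j, (l j * r j) * w m j
        = l j * ((s ^ m)⁻¹ * (A ^ m).mulVec v j) - l j * (c * r j) := by
      intro j
      rw [hw]
      field_simp [hrne j]
    rw [Finset.sum_congr rfl fun j _ => h1 j, Finset.sum_sub_distrib]
    have h2 : ∑ j, l j * ((s ^ m)⁻¹ * (A ^ m).mulVec v j)
        = (s ^ m)⁻¹ * ∑ j, l j * (A ^ m).mulVec v j := by
      rw [Finset.mul_sum]; exact Finset.sum_congr rfl fun j _ => by ring
    have h3 : ∑ j, l j * (A ^ m).mulVec v j = s ^ m * c := by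
      have : ∑ j, l j * (A ^ m).mulVec v j = dotProduct l ((A ^ m).mulVec v) := rfl
      rw [this, Matrix.dotProduct_mulVec, hlA m, smul_dotProduct]
      simp [dotProduct, hc, smul_eq_mul]
    have h4 : ∑ j, l j * (c * r j) = c := by
      have : ∑ j, l j * (c * r j) = c * ∑ j, l j * r j := by
        rw [Finset.mul_sum]; exact Finset.sum_congr rfl fun j _ => by ring
      rw [this, hnorm, mul_one]
    rw [h2, h3, h4, inv_mul_cancel_left₀ (hsne m)]
    ring
  -- one contraction step
  have hstep : ∀ m : ℕ, ‖w (m + k)‖ ≤ θ * ‖w m‖ := by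
    intro m
    rw [pi_norm_le_iff_of_nonneg (mul_nonneg hθ_pos.le (norm_nonneg _))]
    intro i
    rw [Real.norm_eq_abs, hiter k m i]
    have := rpf_aux_contr (N k i) (fun j => l j * r j) (w m) ε ‖w m‖
      (fun j => hε_le i j) (horth m) (norm_nonneg _)
      (fun j => by rw [← Real.norm_eq_abs]; exact norm_le_pi_norm (w m) j)
    rw [hNrow k i, hnorm, mul_one] at this
    calc |∑ j, N k i j * w m j| ≤ (1 - ε) * ‖w m‖ := this
      _ ≤ θ * ‖w m‖ :=
        mul_le_mul_of_nonneg_right (le_max_left _ _) (norm_nonneg _)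
  -- monotonicity (no contraction)
  have hmono : ∀ m : ℕ, ‖w (m + 1)‖ ≤ ‖w m‖ := by
    intro m
    rw [pi_norm_le_iff_of_nonneg (norm_nonneg _)]
    intro i
    rw [Real.norm_eq_abs, hiter 1 m i]
    have := rpf_aux_contr (N 1 i) (fun _ => (0:ℝ)) (w m) 0 ‖w m‖
      (fun j => by simpa using hN_nonneg 1 i j) (by simp) (norm_nonneg _)
      (fun j => by rw [← Real.norm_eq_abs]; exact norm_le_pi_norm (w m) j)
    rw [hNrow 1 i] at this
    simpa using this
  have hmono' : ∀ p q : ℕ, p ≤ q → ‖w q‖ ≤ ‖w p‖ := by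
    intro p q hpq
    induction q, hpq using Nat.le_induction with
    | base => exact le_refl _
    | succ q hq ih => exact le_trans (hmono q) ih
  -- geometric decay
  have hgeom : ∀ m : ℕ, ‖w m‖ ≤ θ ^ (m / k) * ‖w 0‖ := by
    intro m
    induction m using Nat.strong_induction_on with
    | _ m ih =>
      by_cases hm : m < k
      · rw [Nat.div_eq_of_lt hm, pow_zero, one_mul]
        exact hmono' 0 m (Nat.zero_le m)
      · push_neg at hm
        have h1 : m = (m - k) + k := (Nat.sub_add_cancel hm).symm
        calc ‖w m‖ = ‖w ((m - k) + k)‖ := by rw [← h1]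
          _ ≤ θ * ‖w (m - k)‖ := hstep _
          _ ≤ θ * (θ ^ ((m - k) / k) * ‖w 0‖) :=
            mul_le_mul_of_nonneg_left (ih (m - k) (by omega)) hθ_pos.le
          _ = θ ^ ((m - k) / k + 1) * ‖w 0‖ := by ring
          _ = θ ^ (m / k) * ‖w 0‖ := by rw [Nat.div_eq_sub_div hk0 hm]
  -- bound on the initial vector
  have hW0 : ‖w 0‖ ≤ K * ‖v‖ := by
    rw [pi_norm_le_iff_of_nonneg (mul_nonneg hK_pos.le (norm_nonneg _))]
    intro j
    have hw0 : w 0 j = v j / r j - c := by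
      rw [hw]
      simp only [pow_zero, inv_one, one_mul, Matrix.one_mulVec]
      rw [sub_div, mul_div_assoc, div_self (hrne j), mul_one]
    rw [Real.norm_eq_abs, hw0]
    have h1 : |v j / r j| ≤ (r j)⁻¹ * ‖v‖ := by
      rw [abs_div, abs_of_pos (hr j), div_eq_inv_mul]
      exact mul_le_mul_of_nonneg_left (by
        rw [← Real.norm_eq_abs]; exact norm_le_pi_norm v j) (inv_pos.2 (hr j)).le
    have h2 : |c| ≤ (∑ i, l i) * ‖v‖ := by
      rw [hc]
      calc |∑ i, l i * v i| ≤ ∑ i, |l i * v i| := Finset.abs_sum_le_sum_abs _ _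
        _ ≤ ∑ i, l i * ‖v‖ := by
          refine Finset.sum_le_sum fun i _ => ?_
          rw [abs_mul, abs_of_pos (hl i)]
          exact mul_le_mul_of_nonneg_left (by
            rw [← Real.norm_eq_abs]; exact norm_le_pi_norm v i) (hl i).le
        _ = (∑ i, l i) * ‖v‖ := by rw [← Finset.sum_mul]
    have h3 : (r j)⁻¹ ≤ ∑ i, (r i)⁻¹ :=
      Finset.single_le_sum (fun i _ => (inv_pos.2 (hr i)).le) (Finset.mem_univ j)
    calc |v j / r j - c| ≤ |v j / r j| + |c| := abs_sub _ _
      _ ≤ (r j)⁻¹ * ‖v‖ + (∑ i, l i) * ‖v‖ := add_le_add h1 h2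
      _ ≤ (∑ i, (r i)⁻¹) * ‖v‖ + (∑ i, l i) * ‖v‖ := by
          exact add_le_add_left (mul_le_mul_of_nonneg_right h3 (norm_nonneg _)) _
      _ = K * ‖v‖ := by rw [hK]; ring
  -- final assembly
  rw [pi_norm_le_iff_of_nonneg (by positivity)]
  intro i
  have hXi : ((s ^ m)⁻¹ • (A ^ m).mulVec v - c • r) i = r i * w m i := by
    rw [hw]
    rw [Pi.sub_apply, Pi.smul_apply, Pi.smul_apply, smul_eq_mul, smul_eq_mul,
      mul_div_cancel₀ _ (hrne i)]
  rw [hXi, Real.norm_eq_abs, abs_mul, abs_of_pos (hr i)]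
  have hwi : |w m i| ≤ θ ^ (m / k) * ‖w 0‖ :=
    le_trans (by rw [← Real.norm_eq_abs]; exact norm_le_pi_norm (w m) i) (hgeom m)
  have hri : r i ≤ R := Finset.single_le_sum (fun t _ => (hr t).le) (Finset.mem_univ i)
  calc r i * |w m i| ≤ R * (θ ^ (m / k) * ‖w 0‖) :=
        mul_le_mul hri hwi (abs_nonneg _) hR_pos.le
    _ ≤ R * ((2 * ρ ^ m) * (K * ‖v‖)) := by
        refine mul_le_mul_of_nonneg_left ?_ hR_pos.le
        refine mul_le_mul (hθρ m) hW0 (norm_nonneg _) (by positivity)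
    _ = 2 * R * K * ρ ^ m * ‖v‖ := by ring
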